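/- Let c, d, t be integers with cd ≠ 0, t(t^2 - 4d) = c^2, and x^4 + cx + d irreducible over ℚ. Then neither t nor t^2 - 4d is a perfect square in ℤ. -/

import Mathlib

open Polynomial

/-- Auxiliary: if `c = s * u` and `u ^ 2 = s ^ 4 - 4 * d`, then `x^4 + c x + d`
factors over `ℚ` as a product of two quadratics, contradicting irreducibility. -/
lemma factor_contra (c d s u : ℤ) (hcsu : c = s * u) (hd4 : u ^ 2 = s ^ 4 - 4 * d)
    (hirr : Irreducible ((X ^ 4 + C c * X + C d : Polynomial ℤ).map (algebraMap ℤ ℚ))) :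
    False := by
  set β : ℚ := ((s : ℚ) ^ 2 - u) / 2 with hβ
  set γ : ℚ := ((s : ℚ) ^ 2 + u) / 2 with hγ
  have h1 : (c : ℚ) = (s : ℚ) * u := by exact_mod_cast hcsu
  have h2 : (u : ℚ) ^ 2 = (s : ℚ) ^ 4 - 4 * d := by exact_mod_cast hd4
  have h1' : (C (c : ℚ) : ℚ[X]) = C (s : ℚ) * (C γ - C β) := by
    rw [← C_sub, ← C_mul]
    congr 1
    rw [hβ, hγ, h1]; ring
  have hd' : (C (d : ℚ) : ℚ[X]) = C β * C γ := by
    rw [← C_mul]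
    congr 1
    rw [hβ, hγ]
    field_simp
    linarith [h2]
  have h3' : (C β + C γ : ℚ[X]) = C (s : ℚ) ^ 2 := by
    rw [← C_pow, ← C_add]
    congr 1
    rw [hβ, hγ]; ring
  have key : (X ^ 4 + C c * X + C d : Polynomial ℤ).map (algebraMap ℤ ℚ) =
      (X ^ 2 + C (s : ℚ) * X + C β) * (X ^ 2 - C (s : ℚ) * X + C γ) := by
    simp only [Polynomial.map_add, Polynomial.map_mul, Polynomial.map_pow, Polynomial.map_X,
      Polynomial.map_C]
    rw [show ((algebraMap ℤ ℚ) c : ℚ) = (c : ℚ) by simp,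
        show ((algebraMap ℤ ℚ) d : ℚ) = (d : ℚ) by simp]
    linear_combination X * h1' + hd' - X ^ 2 * h3'
  rcases hirr.isUnit_or_isUnit key with hg | hg
  · have hdeg : (X ^ 2 + C (s : ℚ) * X + C β).natDegree = 2 := by compute_degree!
    have := Polynomial.natDegree_eq_zero_of_isUnit hg
    omega
  · have hdeg : (X ^ 2 - C (s : ℚ) * X + C γ).natDegree = 2 := by compute_degree!
    have := Polynomial.natDegree_eq_zero_of_isUnit hg
    omega

/-- If `x^4 + c x + d` is irreducible over `ℚ`, `c d ≠ 0` and `t (t^2 - 4 d) = c^2`,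
then neither `t` nor `t^2 - 4 d` is a perfect square. -/
theorem not_square_of_irreducible (c d t : ℤ) (hcd : c * d ≠ 0)
    (ht : t * (t ^ 2 - 4 * d) = c ^ 2)
    (hirr : Irreducible ((X ^ 4 + C c * X + C d : Polynomial ℤ).map (algebraMap ℤ ℚ))) :
    ¬ IsSquare t ∧ ¬ IsSquare (t ^ 2 - 4 * d) := by
  have hc : c ≠ 0 := fun h => hcd (by rw [h, zero_mul])
  constructor
  · rintro ⟨s, rfl⟩
    have hs0 : s ≠ 0 := by
      rintro rfl
      simp only [mul_zero, zero_mul] at ht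
      exact hc (by nlinarith [sq_nonneg c])
    have hdvd : s ∣ c := by
      rw [← Int.pow_dvd_pow_iff (n := 2) (by norm_num)]
      exact ⟨(s * s) ^ 2 - 4 * d, by rw [← ht]; ring⟩
    obtain ⟨u, rfl⟩ := hdvd
    have hu2 : u ^ 2 = s ^ 4 - 4 * d := by
      have h' : s ^ 2 * u ^ 2 = s ^ 2 * (s ^ 4 - 4 * d) := by linear_combination -ht
      exact mul_left_cancel₀ (pow_ne_zero 2 hs0) h'
    exact factor_contra (s * u) d s u rfl hu2 hirr
  · rintro ⟨u, hu⟩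
    have hu0 : u ≠ 0 := by
      rintro rfl
      rw [mul_zero] at hu
      rw [hu, mul_zero] at ht
      exact hc (by nlinarith [sq_nonneg c])
    have hdvd : u ∣ c := by
      rw [← Int.pow_dvd_pow_iff (n := 2) (by norm_num)]
      exact ⟨t, by rw [← ht, hu]; ring⟩
    obtain ⟨s, rfl⟩ := hdvd
    have hts : t = s ^ 2 := by
      have h' : u ^ 2 * t = u ^ 2 * s ^ 2 := by linear_combination ht - t * hu
      exact mul_left_cancel₀ (pow_ne_zero 2 hu0) h'
    have hu2' : u ^ 2 = s ^ 4 - 4 * d := by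
      have := hu
      rw [hts] at this
      linear_combination -this
    exact factor_contra (u * s) d s u (mul_comm u s) hu2' hirr
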